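/- Let κ be a regular cardinal and G a κ-existentially closed group of cardinality κ. Then |Aut(G)| = 2^κ. -/

import Mathlib

universe u

/-- `G` is `κ`-existentially closed: every system of fewer than `κ` equations and fewer than
`κ` inequations (words in the free product of `G` with free variables `X`), which has a
solution in some overgroup of `G`, already has a solution in `G`. -/
def IsKappaEC (κ : Cardinal.{u}) (G : Type u) [Group G] : Prop :=
  ∀ (X : Type u) (eqs ineqs : Set (FreeGroup (G ⊕ X))),
    Cardinal.mk eqs < κ → Cardinal.mk ineqs < κ →
    (∃ (H : Type u) (_ : Group H) (i : G →* H), Function.Injective i ∧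
      ∃ v : X → H,
        (∀ w ∈ eqs, FreeGroup.lift (Sum.elim (⇑i) v) w = 1) ∧
        (∀ w ∈ ineqs, FreeGroup.lift (Sum.elim (⇑i) v) w ≠ 1)) →
    ∃ v : X → G,
      (∀ w ∈ eqs, FreeGroup.lift (Sum.elim (id : G → G) v) w = 1) ∧
      (∀ w ∈ ineqs, FreeGroup.lift (Sum.elim (id : G → G) v) w ≠ 1)

namespace KEC

variable {κ : Cardinal.{u}} {G : Type u} [Group G]

/-- L2: a small set has a centralizing element that is not central. -/
theorem exists_comm (hκ : κ.IsRegular) (hG : IsKappaEC κ G) (S : Set G)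
    (hS : Cardinal.mk S < κ) :
    ∃ c x : G, (∀ s ∈ S, c * s = s * c) ∧ c * x ≠ x * c := by
  classical
  set X : Type u := ULift.{u} Bool with hX
  let tv : FreeGroup (G ⊕ X) := FreeGroup.of (Sum.inr ⟨false⟩)
  let xv : FreeGroup (G ⊕ X) := FreeGroup.of (Sum.inr ⟨true⟩)
  let w : G → FreeGroup (G ⊕ X) := fun s =>
    tv * FreeGroup.of (Sum.inl s) * tv⁻¹ * (FreeGroup.of (Sum.inl s))⁻¹
  have h := hG X (w '' S) {tv * xv * tv⁻¹ * xv⁻¹}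
    (lt_of_le_of_lt Cardinal.mk_image_le hS)
    (by rw [Cardinal.mk_singleton]; exact lt_of_lt_of_le Cardinal.one_lt_aleph0 hκ.aleph0_le)
    ?_
  · obtain ⟨v, hveq, hvne⟩ := h
    refine ⟨v ⟨false⟩, v ⟨true⟩, ?_, ?_⟩
    · intro s hs
      have := hveq (w s) ⟨s, hs, rfl⟩
      simp only [w, tv, map_mul, map_inv, FreeGroup.lift_apply_of, Sum.elim_inl, Sum.elim_inr,
        id_eq] at this
      rw [mul_inv_eq_one] at this
      have h2 : v ⟨false⟩ * s * (v ⟨false⟩)⁻¹ = s := this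
      calc v ⟨false⟩ * s = (v ⟨false⟩ * s * (v ⟨false⟩)⁻¹) * v ⟨false⟩ := by group
        _ = s * v ⟨false⟩ := by rw [h2]
    · intro hc
      have := hvne _ rfl
      apply this
      simp only [tv, xv, map_mul, map_inv, FreeGroup.lift_apply_of, Sum.elim_inr]
      rw [show v ⟨false⟩ * v ⟨true⟩ = v ⟨true⟩ * v ⟨false⟩ from hc]
      group
  · -- overgroup G × FreeGroup X
    refine ⟨G × FreeGroup X, inferInstance, MonoidHom.inl G (FreeGroup X), ?_, ?_⟩
    · intro a b hab
      simpa using congrArg Prod.fst hab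
    · refine ⟨fun b => (1, FreeGroup.of b), ?_, ?_⟩
      · rintro _ ⟨s, _, rfl⟩
        simp [w, tv, Prod.ext_iff]
      · intro ww hww
        rw [Set.mem_singleton_iff] at hww
        subst hww
        simp only [tv, xv, map_mul, map_inv, FreeGroup.lift_apply_of, Sum.elim_inr]
        intro hcon
        have h2 := congrArg Prod.snd hcon
        simp only [Prod.snd_mul, Prod.snd_inv, Prod.snd_one] at h2
        -- h2 : of ⟨false⟩ * of ⟨true⟩ * (of ⟨false⟩)⁻¹ * (of ⟨true⟩)⁻¹ = 1 in FreeGroup X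
        have h3 := congrArg (FreeGroup.lift (fun b : X =>
          if b.down then (Equiv.swap (0 : Fin 3) 1) else Equiv.swap (1 : Fin 3) 2)) h2
        simp only [map_mul, map_inv, FreeGroup.lift_apply_of, map_one] at h3
        norm_num at h3
        revert h3; decide


/-- L1: an injective endomorphism of a small-generated subgroup is induced by conjugation. -/
theorem exists_conj (hκ : κ.IsRegular) (hG : IsKappaEC κ G) (K : Subgroup G)
    (T : Set G) (hT : Subgroup.closure T = K) (hTκ : Cardinal.mk T < κ)
    (f : K →* G) (hf : Function.Injective f) :
    ∃ g : G, ∀ k : K, f k = g * k * g⁻¹ := by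
  classical
  set X : Type u := PUnit.{u+1} with hX
  let tv : FreeGroup (G ⊕ X) := FreeGroup.of (Sum.inr ⟨⟩)
  have hTK : ∀ τ ∈ T, τ ∈ K := fun τ hτ => hT ▸ Subgroup.subset_closure hτ
  let w : T → FreeGroup (G ⊕ X) := fun τ =>
    tv * FreeGroup.of (Sum.inl τ.1) * tv⁻¹ * (FreeGroup.of (Sum.inl (f ⟨τ.1, hTK τ.1 τ.2⟩)))⁻¹
  have h := hG X (Set.range w) ∅
    (lt_of_le_of_lt Cardinal.mk_range_le hTκ)
    (by rw [Cardinal.mk_emptyCollection]; exact lt_of_lt_of_le Cardinal.aleph0_pos hκ.aleph0_le)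
    ?_
  · obtain ⟨v, hveq, -⟩ := h
    set g : G := v ⟨⟩ with hg
    refine ⟨g, ?_⟩
    have key : ∀ τ (hτ : τ ∈ T), f ⟨τ, hTK τ hτ⟩ = g * τ * g⁻¹ := by
      intro τ hτ
      have := hveq (w ⟨τ, hτ⟩) ⟨⟨τ, hτ⟩, rfl⟩
      simp only [w, tv, map_mul, map_inv, FreeGroup.lift_apply_of, Sum.elim_inl, Sum.elim_inr,
        id_eq] at this
      rw [mul_inv_eq_one] at this
      exact this.symm
    intro k
    obtain ⟨x, hxK⟩ := k
    have hx' : x ∈ Subgroup.closure T := hT.symm ▸ hxK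
    revert hxK
    refine Subgroup.closure_induction
      (p := fun y hy => ∀ (hyK : y ∈ K), f ⟨y, hyK⟩ = g * y * g⁻¹) ?_ ?_ ?_ ?_ hx'
    · intro y hy _
      exact key y hy
    · intro _
      have : (⟨1, (1:K).2⟩ : K) = 1 := rfl
      rw [this, map_one]; group
    · intro y z hy hz ihy ihz hyz
      have hyK : y ∈ K := hT ▸ hy
      have hzK : z ∈ K := hT ▸ hz
      have : (⟨y * z, hyz⟩ : K) = ⟨y, hyK⟩ * ⟨z, hzK⟩ := rfl
      rw [this, map_mul, ihy hyK, ihz hzK]; group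
    · intro y hy ihy hyi
      have hyK : y ∈ K := hT ▸ hy
      have : (⟨y⁻¹, hyi⟩ : K) = (⟨y, hyK⟩)⁻¹ := rfl
      rw [this, map_inv, ihy hyK]; group
  · -- overgroup: HNN extension
    refine ⟨HNNExtension G K f.range (MonoidHom.ofInjective hf), inferInstance,
      HNNExtension.of, HNNExtension.of_injective _, fun _ => HNNExtension.t, ?_, by simp⟩
    rintro _ ⟨τ, rfl⟩
    simp only [w, tv, map_mul, map_inv, FreeGroup.lift_apply_of, Sum.elim_inl, Sum.elim_inr]
    rw [mul_inv_eq_one]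
    have := HNNExtension.equiv_eq_conj (φ := MonoidHom.ofInjective hf) ⟨τ.1, hTK τ.1 τ.2⟩
    rw [MonoidHom.ofInjective_apply] at this
    rw [← this]

abbrev Idx (κ : Cardinal.{u}) : Type u := κ.ord.ToType

def Br (κ : Cardinal.{u}) (α : Idx κ) : Type u := {β : Idx κ // β < α} → Bool

def res {κ : Cardinal.{u}} {α β : Idx κ} (h : β ≤ α) (s : Br κ α) : Br κ β :=
  fun γ => s ⟨γ.1, lt_of_lt_of_le γ.2 h⟩

variable (κ) (G)

structure Inv (e : Idx κ ≃ G) (α : Idx κ)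
    (ih : ∀ β : Idx κ, β < α → Br κ β → Subgroup G × G)
    (d : Br κ α → Subgroup G × G) : Prop where
  gen : ∀ s, ∃ T : Set G, Cardinal.mk T < κ ∧ Subgroup.closure T = (d s).1
  mono : ∀ s β (h : β < α), (ih β h (res h.le s)).1 ≤ (d s).1
  consist : ∀ s β (h : β < α), ∀ x ∈ (ih β h (res h.le s)).1,
    (d s).2 * x * (d s).2⁻¹ = (ih β h (res h.le s)).2 * x * (ih β h (res h.le s)).2⁻¹
  consist' : ∀ s β (h : β < α), ∀ x ∈ (ih β h (res h.le s)).1,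
    (d s).2 * ((ih β h (res h.le s)).2⁻¹ * x * (ih β h (res h.le s)).2) * (d s).2⁻¹ = x
  closed : ∀ s β (h : β < α), ∀ x ∈ (ih β h (res h.le s)).1,
    (ih β h (res h.le s)).2⁻¹ * x * (ih β h (res h.le s)).2 ∈ (d s).1
  absorb : ∀ (s : Br κ α) β (_ : β < α), e β ∈ (d s).1
  branch : ∀ (s s' : Br κ α) (β₀ : Idx κ) (hβ₀ : β₀ < α), (∀ γ, γ < α → γ ≤ β₀) →
    (∀ γ (hγ : γ < β₀), s ⟨γ, hγ.trans hβ₀⟩ = s' ⟨γ, hγ.trans hβ₀⟩) →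
    s ⟨β₀, hβ₀⟩ ≠ s' ⟨β₀, hβ₀⟩ →
    ∃ x, x ∈ (d s).1 ∧ x ∈ (d s').1 ∧
      (d s).2 * x * (d s).2⁻¹ ≠ (d s').2 * x * (d s').2⁻¹

theorem exists_inv (hκ : κ.IsRegular) (hG : IsKappaEC κ G) (e : Idx κ ≃ G)
    (D : ∀ α : Idx κ, Br κ α → Subgroup G × G) (α : Idx κ)
    (hIH : ∀ β (h : β < α), Inv κ G e β (fun γ _ => D γ) (D β)) :
    ∃ d, Inv κ G e α (fun γ _ => D γ) d := by
  classical
  by_cases hne : ∃ β : Idx κ, β < α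
  · by_cases hmax : ∃ β₀, (β₀ < α) ∧ ∀ γ, γ < α → γ ≤ β₀
    · -- successor case
      obtain ⟨β₀, hβ₀, hmax⟩ := hmax
      have hI := hIH β₀ hβ₀
      choose T hTκ hTcl using hI.gen
      set g₀ : Br κ β₀ → G := fun t => (D β₀ t).2 with hg₀
      set Tfull : Br κ β₀ → Set G := fun t =>
        T t ∪ (fun y => (g₀ t)⁻¹ * y * g₀ t) '' T t ∪ {e β₀} with hTfulldef
      have hTfullκ : ∀ t, Cardinal.mk (Tfull t) < κ := by
        intro t
        refine lt_of_le_of_lt (le_trans (Cardinal.mk_union_le _ _)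
          (add_le_add (Cardinal.mk_union_le _ _) le_rfl)) ?_
        have h1 : Cardinal.mk ((fun y => (g₀ t)⁻¹ * y * g₀ t) '' T t) < κ :=
          lt_of_le_of_lt Cardinal.mk_image_le (hTκ t)
        have h2 : Cardinal.mk ({e β₀} : Set G) < κ := by
          rw [Cardinal.mk_singleton]; exact lt_of_lt_of_le Cardinal.one_lt_aleph0 hκ.aleph0_le
        exact Cardinal.add_lt_of_lt hκ.aleph0_le
          (Cardinal.add_lt_of_lt hκ.aleph0_le (hTκ t) h1) h2
      choose c xw hcomm hnc using fun t => exists_comm hκ hG (Tfull t) (hTfullκ t)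
      have hcent : ∀ t, ∀ y ∈ Subgroup.closure (Tfull t), c t * y = y * c t := by
        intro t y hy
        have hle : Subgroup.closure (Tfull t) ≤ Subgroup.centralizer {c t} := by
          rw [Subgroup.closure_le]
          intro τ hτ
          rw [SetLike.mem_coe, Subgroup.mem_centralizer_iff]
          intro h hh
          rw [Set.mem_singleton_iff] at hh
          subst hh
          exact hcomm t τ hτ
        have hmem := hle hy
        rw [Subgroup.mem_centralizer_iff] at hmem
        exact hmem (c t) rfl
      -- K t ≤ closure (Tfull t)
      have h1 : ∀ t, (D β₀ t).1 ≤ Subgroup.closure (Tfull t) := by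
        intro t
        rw [← hTcl t]
        exact Subgroup.closure_mono (fun y hy => Or.inl (Or.inl hy))
      -- conjugates of K t land in closure (Tfull t)
      have hconj : ∀ t, ∀ x ∈ (D β₀ t).1, (g₀ t)⁻¹ * x * g₀ t ∈ Subgroup.closure (Tfull t) := by
        intro t x hx
        rw [← hTcl t] at hx
        induction hx using Subgroup.closure_induction with
        | mem y hy => exact Subgroup.subset_closure (Or.inl (Or.inr ⟨y, hy, rfl⟩))
        | one => simpa using Subgroup.one_mem _
        | mul y z hy hz ihy ihz =>
          have : (g₀ t)⁻¹ * (y * z) * g₀ t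
              = ((g₀ t)⁻¹ * y * g₀ t) * ((g₀ t)⁻¹ * z * g₀ t) := by group
          rw [this]; exact Subgroup.mul_mem _ ihy ihz
        | inv y hy ihy =>
          have : (g₀ t)⁻¹ * y⁻¹ * g₀ t = ((g₀ t)⁻¹ * y * g₀ t)⁻¹ := by group
          rw [this]; exact Subgroup.inv_mem _ ihy
      have h2 : ∀ t, Subgroup.closure (Tfull t)
          ≤ Subgroup.closure (Tfull t ∪ {c t, xw t}) :=
        fun t => Subgroup.closure_mono Set.subset_union_left
      have hconjgen : ∀ (t : Br κ β₀) (b : Bool) (y : G), c t * y * (c t)⁻¹ = y →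
          g₀ t * (if b then c t else 1) * y * (g₀ t * (if b then c t else 1))⁻¹
            = g₀ t * y * (g₀ t)⁻¹ := by
        intro t b y hy
        cases b
        · simp
        · simp only [if_true]
          calc g₀ t * c t * y * (g₀ t * c t)⁻¹
              = g₀ t * (c t * y * (c t)⁻¹) * (g₀ t)⁻¹ := by group
            _ = g₀ t * y * (g₀ t)⁻¹ := by rw [hy]
      refine ⟨fun s => (Subgroup.closure (Tfull (res hβ₀.le s) ∪
          {c (res hβ₀.le s), xw (res hβ₀.le s)}),
          g₀ (res hβ₀.le s) * (if s ⟨β₀, hβ₀⟩ then c (res hβ₀.le s) else 1)),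
        ?_, ?_, ?_, ?_, ?_, ?_, ?_⟩
      · -- gen
        intro s
        refine ⟨_, ?_, rfl⟩
        refine lt_of_le_of_lt (Cardinal.mk_union_le _ _) ?_
        refine Cardinal.add_lt_of_lt hκ.aleph0_le (hTfullκ _) ?_
        exact lt_of_lt_of_le (Set.toFinite _).lt_aleph0 hκ.aleph0_le
      · -- mono
        intro s β h
        rcases eq_or_lt_of_le (hmax β h) with he | hl
        · subst he
          exact le_trans (h1 _) (h2 _)
        · exact le_trans (hI.mono (res hβ₀.le s) β hl) (le_trans (h1 _) (h2 _))
      · -- consist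
        intro s β h x hx
        set t := res hβ₀.le s with ht
        have hxc : x ∈ Subgroup.closure (Tfull t) := by
          rcases eq_or_lt_of_le (hmax β h) with he | hl
          · cases he; exact h1 t hx
          · exact h1 t (hI.mono t β hl hx)
        have hcx : c t * x * (c t)⁻¹ = x := by
          rw [hcent t x hxc]; exact mul_inv_cancel_right _ _
        rw [hconjgen t (s ⟨β₀, hβ₀⟩) x hcx]
        rcases eq_or_lt_of_le (hmax β h) with he | hl
        · cases he; rfl
        · exact hI.consist t β hl x hx
      · -- consist'
        intro s β h x hx
        set t := res hβ₀.le s with ht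
        rcases eq_or_lt_of_le (hmax β h) with he | hl
        · cases he
          have hy : (g₀ t)⁻¹ * x * g₀ t ∈ Subgroup.closure (Tfull t) := hconj t x hx
          have hyc : c t * ((g₀ t)⁻¹ * x * g₀ t) * (c t)⁻¹ = (g₀ t)⁻¹ * x * g₀ t := by
            rw [hcent t _ hy]; exact mul_inv_cancel_right _ _
          rw [hconjgen t (s ⟨β₀, hβ₀⟩) _ hyc]
          group
        · have hy : (D β (res h.le s)).2⁻¹ * x * (D β (res h.le s)).2 ∈ (D β₀ t).1 :=
            hI.closed t β hl x hx
          have hy' : (D β (res h.le s)).2⁻¹ * x * (D β (res h.le s)).2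
              ∈ Subgroup.closure (Tfull t) := h1 t hy
          have hyc : c t * ((D β (res h.le s)).2⁻¹ * x * (D β (res h.le s)).2) * (c t)⁻¹
              = (D β (res h.le s)).2⁻¹ * x * (D β (res h.le s)).2 := by
            rw [hcent t _ hy']; exact mul_inv_cancel_right _ _
          rw [hconjgen t (s ⟨β₀, hβ₀⟩) _ hyc]
          exact hI.consist' t β hl x hx
      · -- closed
        intro s β h x hx
        set t := res hβ₀.le s with ht
        rcases eq_or_lt_of_le (hmax β h) with he | hl
        · cases he
          exact h2 t (hconj t x hx)
        · exact h2 t (h1 t (hI.closed t β hl x hx))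
      · -- absorb
        intro s β h
        set t := res hβ₀.le s with ht
        rcases eq_or_lt_of_le (hmax β h) with he | hl
        · cases he
          exact h2 t (Subgroup.subset_closure (Or.inr rfl))
        · exact h2 t (h1 t (hI.absorb t β hl))
      · -- branch
        intro s s' β₀' hβ₀' hmax' hagr hnebit
        have hββ : β₀' = β₀ := le_antisymm (hmax β₀' hβ₀') (hmax' β₀ hβ₀)
        subst hββ
        have hres : res hβ₀'.le s = res hβ₀'.le s' := funext fun γ => hagr γ.1 γ.2
        set t := res hβ₀'.le s with ht
        refine ⟨xw t, Subgroup.subset_closure (Or.inr (Or.inr rfl)), ?_, ?_⟩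
        · rw [← hres]
          exact Subgroup.subset_closure (Or.inr (Or.inr rfl))
        · rw [← hres]
          have key : ∀ u : G, g₀ t * u * (g₀ t)⁻¹
              = g₀ t * (c t * u * (c t)⁻¹) * (g₀ t)⁻¹ → c t * u = u * c t := by
            intro u hu
            have h3 : g₀ t * u = g₀ t * (c t * u * (c t)⁻¹) := mul_right_cancel hu
            have h4 : u = c t * u * (c t)⁻¹ := mul_left_cancel h3
            calc c t * u = c t * u * (c t)⁻¹ * c t := by group
              _ = u * c t := by rw [← h4]
          cases hb : s ⟨β₀', hβ₀'⟩ <;> cases hb' : s' ⟨β₀', hβ₀'⟩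
          · exact absurd (hb.trans hb'.symm) hnebit
          · simp only [if_true, if_neg Bool.false_ne_true, mul_one]
            intro hcon
            refine hnc t (key (xw t) ?_)
            calc g₀ t * xw t * (g₀ t)⁻¹ = g₀ t * c t * xw t * (g₀ t * c t)⁻¹ := hcon
              _ = g₀ t * (c t * xw t * (c t)⁻¹) * (g₀ t)⁻¹ := by group
          · simp only [if_true, if_neg Bool.false_ne_true, mul_one]
            intro hcon
            refine hnc t (key (xw t) ?_)
            calc g₀ t * xw t * (g₀ t)⁻¹ = g₀ t * c t * xw t * (g₀ t * c t)⁻¹ := hcon.symm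
              _ = g₀ t * (c t * xw t * (c t)⁻¹) * (g₀ t)⁻¹ := by group
          · exact absurd (hb.trans hb'.symm) hnebit
    · -- limit case
      obtain ⟨β₁, hβ₁⟩ := hne
      have hnomax : ∀ β, β < α → ∃ γ, β < γ ∧ γ < α := by
        push_neg at hmax
        intro β hβ
        obtain ⟨γ, hγα, hγ⟩ := hmax β hβ
        exact ⟨γ, hγ, hγα⟩
      haveI : Nonempty {β : Idx κ // β < α} := ⟨⟨β₁, hβ₁⟩⟩
      set F : Br κ α → {β : Idx κ // β < α} → Subgroup G :=
        fun s β => (D β.1 (res β.2.le s)).1 with hF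
      set gg : Br κ α → {β : Idx κ // β < α} → G :=
        fun s β => (D β.1 (res β.2.le s)).2 with hgg
      have hdir : ∀ s (β γ : {β : Idx κ // β < α}), β.1 ≤ γ.1 → F s β ≤ F s γ := by
        intro s β γ hβγ
        rcases eq_or_lt_of_le hβγ with he | hl
        · have : β = γ := Subtype.ext he
          subst this; exact le_rfl
        · exact (hIH γ.1 γ.2).mono (res γ.2.le s) β.1 hl
      have hcons2 : ∀ s (β γ : {β : Idx κ // β < α}), β.1 < γ.1 →
          ∀ x ∈ F s β, gg s γ * x * (gg s γ)⁻¹ = gg s β * x * (gg s β)⁻¹ :=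
        fun s β γ h => (hIH γ.1 γ.2).consist (res γ.2.le s) β.1 h
      have hanytwo : ∀ s (β γ : {β : Idx κ // β < α}) (x : G), x ∈ F s β → x ∈ F s γ →
          gg s β * x * (gg s β)⁻¹ = gg s γ * x * (gg s γ)⁻¹ := by
        intro s β γ x hxβ hxγ
        rcases lt_trichotomy β.1 γ.1 with h | h | h
        · exact (hcons2 s β γ h x hxβ).symm
        · have : β = γ := Subtype.ext h
          subst this; rfl
        · exact hcons2 s γ β h x hxγ
      have hmemK : ∀ s (x : G), x ∈ (⨆ β, F s β) ↔ ∃ β, x ∈ F s β := by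
        intro s x
        refine Subgroup.mem_iSup_of_directed ?_
        intro β γ
        exact ⟨⟨max β.1 γ.1, max_lt β.2 γ.2⟩, hdir s β _ (le_max_left _ _),
          hdir s γ _ (le_max_right _ _)⟩
      have hst : ∀ s (x : ↥(⨆ β, F s β)), ∃ β, x.1 ∈ F s β :=
        fun s x => (hmemK s x.1).mp x.2
      choose st hst' using hst
      -- the raw union-of-conjugations map
      have hfval : ∀ s (x : ↥(⨆ β, F s β)) (β : {β : Idx κ // β < α}), x.1 ∈ F s β →
          gg s (st s x) * x.1 * (gg s (st s x))⁻¹ = gg s β * x.1 * (gg s β)⁻¹ :=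
        fun s x β h => hanytwo s (st s x) β x.1 (hst' s x) h
      choose TT hTTκ hTTcl using fun s (β : {β : Idx κ // β < α}) =>
        (hIH β.1 β.2).gen (res β.2.le s)
      have hclU : ∀ s, Subgroup.closure (⋃ β, TT s β) = ⨆ β, F s β := by
        intro s
        rw [Subgroup.closure_iUnion]
        exact iSup_congr (hTTcl s)
      have hUκ : ∀ s, Cardinal.mk (⋃ β, TT s β : Set G) < κ := by
        intro s
        refine lt_of_le_of_lt Cardinal.mk_iUnion_le_sum_mk ?_
        refine Cardinal.sum_lt_of_isRegular hκ ?_ (hTTκ s)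
        exact Cardinal.mk_Iio_ord_toType α
      have hL1 : ∀ s, ∃ g : G, ∀ x : ↥(⨆ β, F s β),
          gg s (st s x) * x.1 * (gg s (st s x))⁻¹ = g * x.1 * g⁻¹ := by
        intro s
        have hmul : ∀ x y : ↥(⨆ β, F s β),
            gg s (st s (x * y)) * (x * y).1 * (gg s (st s (x * y)))⁻¹
              = (gg s (st s x) * x.1 * (gg s (st s x))⁻¹)
                * (gg s (st s y) * y.1 * (gg s (st s y))⁻¹) := by
          intro x y
          set δ : {β : Idx κ // β < α} :=
            ⟨max (st s x).1 (st s y).1, max_lt (st s x).2 (st s y).2⟩ with hδ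
          have hx : x.1 ∈ F s δ := hdir s (st s x) δ (le_max_left _ _) (hst' s x)
          have hy : y.1 ∈ F s δ := hdir s (st s y) δ (le_max_right _ _) (hst' s y)
          have hxy : (x * y).1 ∈ F s δ := Subgroup.mul_mem _ hx hy
          rw [hfval s (x * y) δ hxy, hfval s x δ hx, hfval s y δ hy]
          show gg s δ * (x.1 * y.1) * (gg s δ)⁻¹ = _
          group
        have hinj : Function.Injective
            (⇑(MonoidHom.mk' (fun x : ↥(⨆ β, F s β) =>
              gg s (st s x) * x.1 * (gg s (st s x))⁻¹) hmul)) := by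
          intro x y hxy
          simp only [MonoidHom.mk'_apply] at hxy
          set δ : {β : Idx κ // β < α} :=
            ⟨max (st s x).1 (st s y).1, max_lt (st s x).2 (st s y).2⟩ with hδ
          have hx : x.1 ∈ F s δ := hdir s (st s x) δ (le_max_left _ _) (hst' s x)
          have hy : y.1 ∈ F s δ := hdir s (st s y) δ (le_max_right _ _) (hst' s y)
          rw [hfval s x δ hx, hfval s y δ hy] at hxy
          have := mul_left_cancel (mul_right_cancel hxy)
          exact Subtype.ext this
        obtain ⟨g, hg⟩ := exists_conj hκ hG (⨆ β, F s β) (⋃ β, TT s β) (hclU s) (hUκ s)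
          (MonoidHom.mk' (fun x : ↥(⨆ β, F s β) =>
            gg s (st s x) * x.1 * (gg s (st s x))⁻¹) hmul) hinj
        exact ⟨g, fun x => hg x⟩
      choose gl hgl using hL1
      refine ⟨fun s => (⨆ β, F s β, gl s), ?_, ?_, ?_, ?_, ?_, ?_, ?_⟩
      · -- gen
        intro s
        exact ⟨⋃ β, TT s β, hUκ s, hclU s⟩
      · -- mono
        intro s β h
        exact le_iSup (F s) ⟨β, h⟩
      · -- consist
        intro s β h x hx
        have hxK : x ∈ ⨆ β, F s β := le_iSup (F s) ⟨β, h⟩ hx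
        have := (hgl s ⟨x, hxK⟩).symm
        rw [hfval s ⟨x, hxK⟩ ⟨β, h⟩ hx] at this
        exact this
      · -- consist'
        intro s β h x hx
        obtain ⟨γ, hγ1, hγ2⟩ := hnomax β h
        have hy : (D β (res h.le s)).2⁻¹ * x * (D β (res h.le s)).2 ∈ F s ⟨γ, hγ2⟩ :=
          (hIH γ hγ2).closed (res hγ2.le s) β hγ1 x hx
        have hyK : (D β (res h.le s)).2⁻¹ * x * (D β (res h.le s)).2 ∈ ⨆ β, F s β :=
          le_iSup (F s) ⟨γ, hγ2⟩ hy
        have h5 := (hgl s ⟨_, hyK⟩).symm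
        rw [hfval s ⟨_, hyK⟩ ⟨γ, hγ2⟩ hy] at h5
        rw [h5]
        exact (hIH γ hγ2).consist' (res hγ2.le s) β hγ1 x hx
      · -- closed
        intro s β h x hx
        obtain ⟨γ, hγ1, hγ2⟩ := hnomax β h
        exact le_iSup (F s) ⟨γ, hγ2⟩ ((hIH γ hγ2).closed (res hγ2.le s) β hγ1 x hx)
      · -- absorb
        intro s β h
        obtain ⟨γ, hγ1, hγ2⟩ := hnomax β h
        exact le_iSup (F s) ⟨γ, hγ2⟩ ((hIH γ hγ2).absorb (res hγ2.le s) β hγ1)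
      · -- branch
        intro s s' β₀ hβ₀ hmax' _ _
        obtain ⟨γ, hγ1, hγ2⟩ := hnomax β₀ hβ₀
        exact absurd (hmax' γ hγ2) (not_le.mpr hγ1)
  · -- zero case
    refine ⟨fun _ => (⊥, 1),
      fun s => ⟨∅, by simpa using lt_of_lt_of_le Cardinal.aleph0_pos hκ.aleph0_le,
          by simp [Subgroup.closure_empty]⟩,
      fun s β h => absurd ⟨β, h⟩ hne,
      fun s β h => absurd ⟨β, h⟩ hne,
      fun s β h => absurd ⟨β, h⟩ hne,
      fun s β h => absurd ⟨β, h⟩ hne,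
      fun s β h => absurd ⟨β, h⟩ hne,
      fun s s' β₀ hβ₀ _ _ _ => absurd ⟨β₀, hβ₀⟩ hne⟩

open scoped Classical in
noncomputable def DD (e : Idx κ ≃ G) : ∀ α : Idx κ, Br κ α → Subgroup G × G :=
  (IsWellFounded.wf (r := ((· < ·) : Idx κ → Idx κ → Prop))).fix
    (fun α ih => if h : ∃ d, Inv κ G e α ih d then h.choose else fun _ => (⊥, 1))

open scoped Classical in
theorem DD_eq (e : Idx κ ≃ G) (α : Idx κ) :
    DD κ G e α = if h : ∃ d, Inv κ G e α (fun β _ => DD κ G e β) d then h.choose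
      else fun _ => (⊥, 1) :=
  WellFounded.fix_eq _ _ α

theorem DD_spec (hκ : κ.IsRegular) (hG : IsKappaEC κ G) (e : Idx κ ≃ G) :
    ∀ α, Inv κ G e α (fun β _ => DD κ G e β) (DD κ G e α) := by
  intro α
  induction α using (IsWellFounded.wf (r := ((· < ·) : Idx κ → Idx κ → Prop))).induction with
  | _ α ih =>
    have hex := exists_inv κ G hκ hG e (DD κ G e) α ih
    have heq : DD κ G e α = hex.choose := by
      rw [DD_eq, dif_pos hex]
    rw [heq]
    exact hex.choose_spec

variable {κ G}

noncomputable def isucc (hκ : κ.IsRegular) (α : Idx κ) : Idx κ :=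
  (IsWellFounded.wf (r := ((· < ·) : Idx κ → Idx κ → Prop))).min {β | α < β}
    (by haveI := Cardinal.noMaxOrder hκ.aleph0_le
        obtain ⟨β, hβ⟩ := exists_gt α
        exact ⟨β, hβ⟩)

theorem lt_isucc (hκ : κ.IsRegular) (α : Idx κ) : α < isucc hκ α :=
  WellFounded.min_mem _ _ _

theorem isucc_le (hκ : κ.IsRegular) {α γ : Idx κ} (h : α < γ) : isucc hκ α ≤ γ :=
  not_lt.mp (fun hc => WellFounded.not_lt_min _ _ h hc)

def brOf (ε : Idx κ → Bool) (α : Idx κ) : Br κ α := fun β => ε β.1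

theorem main_aut (hκ : κ.IsRegular) (hG : IsKappaEC κ G) (e : Idx κ ≃ G)
    (ε : Idx κ → Bool) :
    ∃ φ : MulAut G, ∀ (α : Idx κ), ∀ x ∈ (DD κ G e α (brOf ε α)).1,
      φ x = (DD κ G e α (brOf ε α)).2 * x * (DD κ G e α (brOf ε α)).2⁻¹ := by
  set M : Idx κ → Subgroup G := fun α => (DD κ G e α (brOf ε α)).1 with hM
  set g : Idx κ → G := fun α => (DD κ G e α (brOf ε α)).2 with hg
  have hstar : ∀ (α α' : Idx κ) (x : G), x ∈ M α → x ∈ M α' →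
      g α * x * (g α)⁻¹ = g α' * x * (g α')⁻¹ := by
    intro α α' x hx hx'
    rcases lt_trichotomy α α' with h | h | h
    · exact ((DD_spec κ G hκ hG e α').consist (brOf ε α') α h x hx).symm
    · subst h; rfl
    · exact (DD_spec κ G hκ hG e α).consist (brOf ε α) α' h x hx'
  have hmem2 : ∀ (x : G) (α : Idx κ), e.symm x < α → x ∈ M α := by
    intro x α h
    have := (DD_spec κ G hκ hG e α).absorb (brOf ε α) (e.symm x) h
    rwa [Equiv.apply_symm_apply] at this
  have hmem : ∀ x : G, x ∈ M (isucc hκ (e.symm x)) :=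
    fun x => hmem2 x _ (lt_isucc hκ _)
  set φ₀ : G → G := fun x => g (isucc hκ (e.symm x)) * x * (g (isucc hκ (e.symm x)))⁻¹
    with hφ₀
  have hφval : ∀ (x : G) (α : Idx κ), x ∈ M α → φ₀ x = g α * x * (g α)⁻¹ :=
    fun x α h => hstar _ _ x (hmem x) h
  have hmul : ∀ x y, φ₀ (x * y) = φ₀ x * φ₀ y := by
    intro x y
    set γ := isucc hκ (max (e.symm x) (max (e.symm y) (e.symm (x * y)))) with hγ
    have hx : x ∈ M γ := hmem2 x γ (lt_of_le_of_lt (le_max_left _ _) (lt_isucc hκ _))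
    have hy : y ∈ M γ := hmem2 y γ
      (lt_of_le_of_lt (le_trans (le_max_left _ _) (le_max_right _ _)) (lt_isucc hκ _))
    have hxy : x * y ∈ M γ := hmem2 (x * y) γ
      (lt_of_le_of_lt (le_trans (le_max_right _ _) (le_max_right _ _)) (lt_isucc hκ _))
    rw [hφval (x * y) γ hxy, hφval x γ hx, hφval y γ hy]
    group
  have hinj : Function.Injective φ₀ := by
    intro x y hxy
    set γ := isucc hκ (max (e.symm x) (e.symm y)) with hγ
    have hx : x ∈ M γ := hmem2 x γ (lt_of_le_of_lt (le_max_left _ _) (lt_isucc hκ _))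
    have hy : y ∈ M γ := hmem2 y γ (lt_of_le_of_lt (le_max_right _ _) (lt_isucc hκ _))
    rw [hφval x γ hx, hφval y γ hy] at hxy
    exact mul_left_cancel (mul_right_cancel hxy)
  have hsurj : Function.Surjective φ₀ := by
    intro y
    set α₀ := isucc hκ (e.symm y) with hα₀
    set α := isucc hκ α₀ with hα
    have hyM : y ∈ M α₀ := hmem y
    have hx : (g α₀)⁻¹ * y * g α₀ ∈ M α :=
      (DD_spec κ G hκ hG e α).closed (brOf ε α) α₀ (lt_isucc hκ α₀) y hyM
    refine ⟨(g α₀)⁻¹ * y * g α₀, ?_⟩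
    rw [hφval _ α hx]
    exact (DD_spec κ G hκ hG e α).consist' (brOf ε α) α₀ (lt_isucc hκ α₀) y hyM
  refine ⟨MulEquiv.ofBijective (MonoidHom.mk' φ₀ hmul) ⟨hinj, hsurj⟩, ?_⟩
  intro α x hx
  show φ₀ x = _
  exact hφval x α hx

end KEC

/-- If `κ` is a regular cardinal and `G` is a `κ`-existentially closed group of
cardinality `κ`, then `|Aut(G)| = 2 ^ κ`. -/
theorem stmt_10 (κ : Cardinal.{u}) (hκ : κ.IsRegular)
    (G : Type u) [Group G] (hG : IsKappaEC κ G) (hcard : Cardinal.mk G = κ) :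
    Cardinal.mk (MulAut G) = 2 ^ κ := by
  classical
  open KEC in
  have hcard' : Cardinal.mk (Idx κ) = Cardinal.mk G := by
    rw [Cardinal.mk_ord_toType, hcard]
  obtain ⟨e⟩ := Cardinal.eq.mp hcard'
  -- upper bound
  have up : Cardinal.mk (MulAut G) ≤ 2 ^ κ := by
    calc Cardinal.mk (MulAut G) ≤ Cardinal.mk (G → G) :=
          Cardinal.mk_le_of_injective (f := fun φ : MulAut G => ⇑φ) DFunLike.coe_injective
      _ = Cardinal.mk G ^ Cardinal.mk G := (Cardinal.power_def G G).symm
      _ = 2 ^ κ := by rw [hcard, Cardinal.power_self_eq hκ.aleph0_le]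
  -- the family of automorphisms
  choose Φ hΦ using fun ε : KEC.Idx κ → Bool => KEC.main_aut hκ hG e ε
  have hΦinj : Function.Injective Φ := by
    intro ε ε' h
    by_contra hne
    obtain ⟨β, hβ⟩ := Function.ne_iff.mp hne
    set Δ : Set (KEC.Idx κ) := {β | ε β ≠ ε' β} with hΔ
    have hΔne : Δ.Nonempty := ⟨β, hβ⟩
    set β₀ := (IsWellFounded.wf (r := ((· < ·) : KEC.Idx κ → KEC.Idx κ → Prop))).min Δ hΔne
      with hβ₀def
    have hβ₀mem : β₀ ∈ Δ := WellFounded.min_mem _ Δ hΔne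
    have hβ₀ : ε β₀ ≠ ε' β₀ := hβ₀mem
    have hminimal : ∀ γ, γ < β₀ → ε γ = ε' γ := by
      intro γ hγ
      by_contra hcon
      exact WellFounded.not_lt_min _ Δ (hcon : γ ∈ Δ) hγ
    set α := KEC.isucc hκ β₀ with hα
    have hβ₀α : β₀ < α := KEC.lt_isucc hκ β₀
    have hmax : ∀ γ, γ < α → γ ≤ β₀ := by
      intro γ hγ
      by_contra hcon
      exact absurd hγ (not_lt.mpr (KEC.isucc_le hκ (not_le.mp hcon)))
    obtain ⟨x, hx, hx', hneq⟩ := (KEC.DD_spec κ G hκ hG e α).branch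
      (KEC.brOf ε α) (KEC.brOf ε' α) β₀ hβ₀α hmax (fun γ hγ => hminimal γ hγ) hβ₀
    have h1 := hΦ ε α x hx
    have h2 := hΦ ε' α x hx'
    have h3 : Φ ε x = Φ ε' x := congrArg (fun ψ : MulAut G => ψ x) h
    rw [h1, h2] at h3
    exact hneq h3
  have low : 2 ^ κ ≤ Cardinal.mk (MulAut G) := by
    have : (2 : Cardinal.{u}) ^ κ = Cardinal.mk (Set (KEC.Idx κ)) := by
      rw [Cardinal.mk_set, Cardinal.mk_ord_toType]
    rw [this]
    refine Cardinal.mk_le_of_injective (f := fun S : Set (KEC.Idx κ) =>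
      Φ (fun β => decide (β ∈ S))) ?_
    intro S S' hSS
    have := hΦinj hSS
    ext β
    exact decide_eq_decide.mp (congrFun this β)
  exact le_antisymm up low
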